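/- arXiv:1506.03569 — 6 statements merged into one kernel-verified Lean document; each statement's English description precedes it below -/
import Mathlib

section
/- Let p = 2k+1 be an odd prime, H a group, B a normal subgroup of H of index p, θ : H → B an isomorphism, and let G = H*_θ be the HNN extension of H relative to θ (with associated subgroups A = H and B). Regard H as a subgroup of G. If g ∈ G is elliptic, i.e. g lies in some conjugate xHx⁻¹ of H in G, then for every left coset vH ∈ G/H either g·vH = vH or the 2k+1 cosets g^j·vH for j = −k, −k+1, …, k−1, k are pairwise distinct. -/
open HNNExtension Subgroup

namespace HNNAux

variable {H : Type*} [Group H] {B : Subgroup H} (θ : H ≃* B)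

/-- The endomorphism of `H` given by `θ` followed by inclusion. -/
def Θ : H →* H := B.subtype.comp θ.toMonoidHom

lemma Θ_apply (h : H) : Θ θ h = (θ h : H) := rfl

lemma t_mul_of' (h : H) :
    (t : HNNExtension H ⊤ B (Subgroup.topEquiv.trans θ)) * of h = of (Θ θ h) * t := by
  have := t_mul_of (φ := Subgroup.topEquiv.trans θ) (a := ⟨h, Subgroup.mem_top h⟩)
  simpa [Θ_apply] using this

lemma t_pow_mul_of (b : ℕ) (c : H) :
    (t : HNNExtension H ⊤ B (Subgroup.topEquiv.trans θ)) ^ (b : ℤ) * of c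
      = of ((⇑(Θ θ))^[b] c) * t ^ (b : ℤ) := by
  induction b generalizing c with
  | zero => simp
  | succ b ih =>
    have h1 : ((b+1 : ℕ) : ℤ) = (b : ℤ) + 1 := by push_cast; ring
    rw [h1, zpow_add, zpow_one, mul_assoc, t_mul_of' θ c, ← mul_assoc, ih (Θ θ c),
      ← Function.iterate_succ_apply, mul_assoc]

lemma t_pow_conj_of (b : ℕ) (c : H) :
    (t : HNNExtension H ⊤ B (Subgroup.topEquiv.trans θ)) ^ (b : ℤ) * of c * t ^ (-(b : ℤ))
      = of ((⇑(Θ θ))^[b] c) := by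
  rw [t_pow_mul_of, mul_assoc, ← zpow_add]
  simp

lemma inv_t_mul_of' (c : H) (hc : c ∈ B) :
    (t : HNNExtension H ⊤ B (Subgroup.topEquiv.trans θ))⁻¹ * of c * t
      = of (θ.symm ⟨c, hc⟩ : H) := by
  have := inv_t_mul_of (φ := Subgroup.topEquiv.trans θ) (b := ⟨c, hc⟩)
  calc (t : HNNExtension H ⊤ B (Subgroup.topEquiv.trans θ))⁻¹ * of c * t
      = (t⁻¹ * of c) * t := by group
    _ = of (θ.symm ⟨c, hc⟩ : H) * t⁻¹ * t := by
        rw [this]; norm_num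
    _ = of (θ.symm ⟨c, hc⟩ : H) := by group

lemma britton (a : ℕ) (c : H) (hc : c ∉ B) :
    (t : HNNExtension H ⊤ B (Subgroup.topEquiv.trans θ)) ^ (-((a : ℤ) + 1)) * of c
        * t ^ ((a : ℤ) + 1) ∉
      (of : H →* HNNExtension H ⊤ B (Subgroup.topEquiv.trans θ)).range := by
  intro hmem
  set r : ℤˣ × H → ℤˣ × H → Prop :=
    fun x y => x.2 ∈ toSubgroup (⊤ : Subgroup H) B x.1 → x.1 = y.1 with hr
  have hchain : List.Chain' r
      (List.replicate a ((-1 : ℤˣ), (1 : H)) ++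
        ((-1 : ℤˣ), c) :: List.replicate (a+1) ((1 : ℤˣ), (1 : H))) := by
    unfold List.Chain'
    rw [List.isChain_append]
    refine ⟨List.isChain_replicate_of_rel _ (fun _ => rfl), ?_, ?_⟩
    · rw [List.isChain_cons]
      refine ⟨?_, List.isChain_replicate_of_rel _ (fun _ => rfl)⟩
      intro y _hy h
      exact absurd h hc
    · intro x hx y hy
      have hx' : x = ((-1 : ℤˣ), (1 : H)) :=
        List.eq_of_mem_replicate (List.mem_of_mem_getLast? hx)
      subst hx'
      intro _h
      simp at hy
      rw [hy.symm]
  set w : NormalWord.ReducedWord H (⊤ : Subgroup H) B :=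
    ⟨1, List.replicate a ((-1 : ℤˣ), (1 : H)) ++
      ((-1 : ℤˣ), c) :: List.replicate (a+1) ((1 : ℤˣ), (1 : H)), hchain⟩ with hw
  have hprod : NormalWord.ReducedWord.prod (Subgroup.topEquiv.trans θ) w
      = t ^ (-((a : ℤ) + 1)) * of c * t ^ ((a : ℤ) + 1) := by
    simp only [hw, NormalWord.ReducedWord.prod, List.map_append, List.map_cons,
      List.map_replicate, List.prod_append, List.prod_cons, List.prod_replicate, map_one,
      mul_one, one_mul, Units.val_neg, Units.val_one, zpow_neg, zpow_one]
    group
  have hnil := ReducedWord.toList_eq_nil_of_mem_of_range (φ := Subgroup.topEquiv.trans θ) w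
    (by rw [hprod]; exact hmem)
  simp [hw] at hnil

variable [B.Normal]

lemma mem_of_zpow_mem {p : ℕ} (hp : p.Prime) (hB : B.index = p) (c : H) {n : ℤ}
    (hn : n ≠ 0) (hn2 : n.natAbs < p) (h : c ^ n ∈ B) : c ∈ B := by
  have hq : ((c : H ⧸ B)) ^ n = 1 := by
    rw [← QuotientGroup.mk_zpow, QuotientGroup.eq_one_iff]; exact h
  have hq2 : ((c : H ⧸ B)) ^ (n.natAbs) = 1 := by
    rcases Int.natAbs_eq n with h' | h'
    · rw [← zpow_natCast, ← h', hq]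
    · rw [← zpow_natCast, ← neg_neg (n.natAbs : ℤ), ← h', zpow_neg, hq, inv_one]
  have hdvd : orderOf ((c : H ⧸ B)) ∣ n.natAbs := orderOf_dvd_of_pow_eq_one hq2
  have hdvd2 : orderOf ((c : H ⧸ B)) ∣ p := by
    have := orderOf_dvd_natCard ((c : H ⧸ B))
    rwa [show Nat.card (H ⧸ B) = p from hB] at this
  rcases (Nat.Prime.eq_one_or_self_of_dvd hp _ hdvd2) with h1 | h1
  · have : ((c : H ⧸ B)) = 1 := orderOf_eq_one_iff.mp h1
    rwa [QuotientGroup.eq_one_iff] at this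
  · exfalso
    rw [h1] at hdvd
    have := Nat.le_of_dvd (Int.natAbs_pos.mpr hn) hdvd
    omega

/-- The core inductive step: if `t^{-a} c^n t^a` is in the base group then so is
`t^{-a} c t^a`, for `n` prime to `p`. -/
lemma conj_zpow_mem_range {p : ℕ} (hp : p.Prime) (hB : B.index = p) {n : ℤ}
    (hn : n ≠ 0) (hn2 : n.natAbs < p) :
    ∀ (a : ℕ) (c : H),
      (t : HNNExtension H ⊤ B (Subgroup.topEquiv.trans θ)) ^ (-(a : ℤ)) * of (c ^ n)
          * t ^ ((a : ℤ)) ∈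
        (of : H →* HNNExtension H ⊤ B (Subgroup.topEquiv.trans θ)).range →
      (t : HNNExtension H ⊤ B (Subgroup.topEquiv.trans θ)) ^ (-(a : ℤ)) * of c
          * t ^ ((a : ℤ)) ∈
        (of : H →* HNNExtension H ⊤ B (Subgroup.topEquiv.trans θ)).range := by
  intro a
  induction a with
  | zero =>
    intro c _
    simpa using ⟨c, rfl⟩
  | succ a ih =>
    intro c hmem
    have hcast : ((a + 1 : ℕ) : ℤ) = (a : ℤ) + 1 := by push_cast; ring
    rw [hcast] at hmem ⊢
    have hcnB : c ^ n ∈ B := by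
      by_contra hcn
      exact britton θ a (c ^ n) hcn hmem
    have hcB : c ∈ B := mem_of_zpow_mem hp hB c hn hn2 hcnB
    have split : ∀ x : H,
        (t : HNNExtension H ⊤ B (Subgroup.topEquiv.trans θ)) ^ (-((a : ℤ) + 1)) * of x
            * t ^ ((a : ℤ) + 1)
          = t ^ (-(a : ℤ)) * (t⁻¹ * of x * t) * t ^ ((a : ℤ)) := by
      intro x; group
    have hsub : (⟨c, hcB⟩ : B) ^ n = ⟨c ^ n, hcnB⟩ := by
      ext; simp
    have key : (t : HNNExtension H ⊤ B (Subgroup.topEquiv.trans θ))⁻¹ * of (c ^ n) * t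
        = of ((θ.symm ⟨c, hcB⟩ : H) ^ n) := by
      rw [inv_t_mul_of' θ (c ^ n) hcnB, ← hsub, map_zpow]
    rw [split, key] at hmem
    have := ih (θ.symm ⟨c, hcB⟩ : H) hmem
    rw [split, inv_t_mul_of' θ c hcB]
    exact this

/-- Every element of this HNN extension has the form `t^{-a} u t^b`. -/
lemma decomp (w : HNNExtension H ⊤ B (Subgroup.topEquiv.trans θ)) :
    ∃ (a b : ℕ) (u : H), w = t ^ (-(a : ℤ)) * of u * t ^ ((b : ℤ)) := by
  induction w using HNNExtension.induction_on with
  | of g => exact ⟨0, 0, g, by simp⟩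
  | t => exact ⟨0, 1, 1, by simp⟩
  | inv x hx =>
    obtain ⟨a, b, u, rfl⟩ := hx
    exact ⟨b, a, u⁻¹, by rw [map_inv]; group⟩
  | mul x y hx hy =>
    obtain ⟨a₁, b₁, u₁, rfl⟩ := hx
    obtain ⟨a₂, b₂, u₂, rfl⟩ := hy
    rcases le_or_gt a₂ b₁ with h | h
    · obtain ⟨e, rfl⟩ := Nat.exists_eq_add_of_le h
      refine ⟨a₁, e + b₂, u₁ * (⇑(Θ θ))^[e] u₂, ?_⟩
      rw [map_mul, ← t_pow_conj_of θ e u₂]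
      push_cast
      group
    · obtain ⟨e, rfl⟩ := Nat.exists_eq_add_of_lt h
      refine ⟨a₁ + (e + 1), b₂, (⇑(Θ θ))^[e+1] u₁ * u₂, ?_⟩
      rw [map_mul, ← t_pow_conj_of θ (e+1) u₁]
      push_cast
      group

lemma iterate_zpow (b : ℕ) (c : H) (n : ℤ) :
    (⇑(Θ θ))^[b] (c ^ n) = ((⇑(Θ θ))^[b] c) ^ n := by
  induction b generalizing c with
  | zero => simp
  | succ b ih =>
    rw [Function.iterate_succ_apply, Function.iterate_succ_apply, map_zpow, ih]

lemma conj_formula (a b : ℕ) (u c : H) :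
    ((t : HNNExtension H ⊤ B (Subgroup.topEquiv.trans θ)) ^ (-(a : ℤ)) * of u * t ^ ((b : ℤ)))
        * of c * (t ^ (-(a : ℤ)) * of u * t ^ ((b : ℤ)))⁻¹
      = t ^ (-(a : ℤ)) * of (u * (⇑(Θ θ))^[b] c * u⁻¹) * t ^ ((a : ℤ)) := by
  rw [map_mul, map_mul, map_inv, ← t_pow_conj_of θ b c]
  group

lemma key_lemma {p : ℕ} (hp : p.Prime) (hB : B.index = p) {n : ℤ}
    (hn : n ≠ 0) (hn2 : n.natAbs < p)
    (w : HNNExtension H ⊤ B (Subgroup.topEquiv.trans θ)) (c : H)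
    (hmem : w * of (c ^ n) * w⁻¹ ∈
      (of : H →* HNNExtension H ⊤ B (Subgroup.topEquiv.trans θ)).range) :
    w * of c * w⁻¹ ∈
      (of : H →* HNNExtension H ⊤ B (Subgroup.topEquiv.trans θ)).range := by
  obtain ⟨a, b, u, rfl⟩ := decomp θ w
  rw [conj_formula] at hmem ⊢
  rw [iterate_zpow] at hmem
  have hconj : u * ((⇑(Θ θ))^[b] c) ^ n * u⁻¹ = (u * (⇑(Θ θ))^[b] c * u⁻¹) ^ n :=
    (conj_zpow).symm
  rw [hconj] at hmem
  exact conj_zpow_mem_range θ hp hB hn hn2 a _ hmem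

end HNNAux

open HNNAux in
/-- Let `p = 2k+1` be an odd prime, `H` a group, `B` a normal subgroup
of `H` of index `p`, `θ : H → B` an isomorphism, and `G = H*_θ` the HNN extension (with
`A = H` and `B`). If `g ∈ G` is elliptic (i.e. conjugate into the image of `H` in `G`),
then for every left coset `vH ∈ G/H` either `g • vH = vH` or the `2k+1` cosets
`gʲ • vH`, `j = -k, …, k`, are pairwise distinct. -/
theorem hnn_elliptic_orbit_dichotomy {H : Type*} [Group H] (p k : ℕ)
    (hp : p.Prime) (hpk : p = 2 * k + 1) (hk : 1 ≤ k)
    (B : Subgroup H) [B.Normal] (hB : B.index = p) (θ : H ≃* B)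
    (g : HNNExtension H ⊤ B (Subgroup.topEquiv.trans θ))
    (hg : ∃ (x : HNNExtension H ⊤ B (Subgroup.topEquiv.trans θ)) (h : H),
      g = x * HNNExtension.of h * x⁻¹)
    (v : HNNExtension H ⊤ B (Subgroup.topEquiv.trans θ) ⧸
      (HNNExtension.of : H →* HNNExtension H ⊤ B (Subgroup.topEquiv.trans θ)).range) :
    g • v = v ∨
      ∀ i j : ℤ, -(k : ℤ) ≤ i → i ≤ k → -(k : ℤ) ≤ j → j ≤ k →
        g ^ i • v = g ^ j • v → i = j := by
  by_cases hgv : g • v = v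
  · exact Or.inl hgv
  right
  intro i j hi1 hi2 hj1 hj2 heq
  by_contra hij
  apply hgv
  set n : ℤ := i - j with hn
  have hn0 : n ≠ 0 := sub_ne_zero.mpr hij
  have hnabs : n.natAbs < p := by rw [hpk]; omega
  have hpow : g ^ n • v = v := by
    have h1 : (g ^ j)⁻¹ • (g ^ i • v) = (g ^ j)⁻¹ • (g ^ j • v) := by rw [heq]
    rw [inv_smul_smul, smul_smul, ← zpow_neg, ← zpow_add,
      show -j + i = i - j by ring] at h1
    exact h1
  obtain ⟨x, rfl⟩ := QuotientGroup.mk_surjective v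
  obtain ⟨y, h, rfl⟩ := hg
  rw [MulAction.Quotient.smul_mk, QuotientGroup.eq] at hpow
  have e1 : ((y * HNNExtension.of h * y⁻¹) ^ n • x)⁻¹ * x
      = (x⁻¹ * y) * HNNExtension.of (h ^ (-n)) * (x⁻¹ * y)⁻¹ := by
    rw [smul_eq_mul, conj_zpow, map_zpow]
    group
  rw [e1] at hpow
  have hkey := key_lemma θ hp hB (n := -n) (neg_ne_zero.mpr hn0)
    (by rwa [Int.natAbs_neg]) (x⁻¹ * y) h hpow
  rw [MulAction.Quotient.smul_mk, QuotientGroup.eq]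
  have e2 : ((y * HNNExtension.of h * y⁻¹) • x)⁻¹ * x
      = ((x⁻¹ * y) * HNNExtension.of h * (x⁻¹ * y)⁻¹)⁻¹ := by
    rw [smul_eq_mul]; group
  rw [e2]
  exact inv_mem hkey
end

section
/- Let p ≥ 2 be an integer, let D = ⨁_{i∈ℕ} ℤ/pℤ with canonical generators a_0, a_1, a_2, …, let K ≤ D be the subgroup of elements whose coordinate at index 0 vanishes (the subgroup generated by a_1, a_2, …), and let f : D → K be the shift isomorphism determined by f(a_i) = a_{i+1}. Then the HNN extension D*_f of D relative to f (with associated subgroups A = D and B = K, where [D : K] = p) is isomorphic to the lamplighter group L_p. -/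
/-- The action of `ℤ` on `⨁_{i∈ℤ} ℤ/nℤ` by shifting coordinates. -/
noncomputable def lampShift (n : ℕ) :
    Multiplicative ℤ →* MulAut (Multiplicative (ℤ →₀ ZMod n)) :=
  zpowersHom _ (AddEquiv.toMultiplicative (Finsupp.domCongr (Equiv.addRight (1 : ℤ))))

/-- The lamplighter group `L_n = (ℤ/nℤ) ≀ ℤ`, the restricted wreath product, i.e. the
semidirect product `(⨁_{i∈ℤ} ℤ/nℤ) ⋊ ℤ` where `ℤ` acts by shifting coordinates. -/
abbrev Lamplighter (n : ℕ) : Type :=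
  SemidirectProduct (Multiplicative (ℤ →₀ ZMod n)) (Multiplicative ℤ) (lampShift n)

/-- The generator `a` of the lamplighter group: generator of the copy of `ℤ/nℤ` at
position `0`. -/
noncomputable def Lamplighter.a (n : ℕ) : Lamplighter n :=
  SemidirectProduct.inl (Multiplicative.ofAdd (Finsupp.single (0 : ℤ) (1 : ZMod n)))

/-- The generator `t` of the lamplighter group: the generator of the acting `ℤ`. -/
noncomputable def Lamplighter.t (n : ℕ) : Lamplighter n :=
  SemidirectProduct.inr (Multiplicative.ofAdd (1 : ℤ))

/-- The base group `D = ⨁_{i∈ℕ} ℤ/pℤ`. -/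
abbrev LampBase (p : ℕ) : Type := Multiplicative (ℕ →₀ ZMod p)

/-- The subgroup `K ≤ D` of elements whose coordinate at index `0` vanishes (the
subgroup generated by `a_1, a_2, …`). -/
noncomputable def lampK (p : ℕ) : Subgroup (LampBase p) :=
  AddSubgroup.toSubgroup (AddMonoidHom.ker (Finsupp.applyAddHom (0 : ℕ)))

open Multiplicative Finsupp

namespace LampAux

variable (p : ℕ)

theorem shift_one (j : ℤ) (c : ZMod p) :
    lampShift p (ofAdd 1) (ofAdd (single j c)) = ofAdd (single (j + 1) c) := by
  rw [lampShift, zpowersHom_apply, toAdd_ofAdd, zpow_one]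
  show ofAdd (Finsupp.equivMapDomain (Equiv.addRight (1 : ℤ)) (single j c)) = _
  rw [Finsupp.equivMapDomain_single, Equiv.coe_addRight]

theorem shift_single (z j : ℤ) (c : ZMod p) :
    lampShift p (ofAdd z) (ofAdd (single j c)) = ofAdd (single (j + z) c) := by
  induction z using Int.induction_on generalizing j with
  | zero => simp
  | succ k ih =>
      have h : (ofAdd ((k : ℤ) + 1)) = ofAdd (k : ℤ) * ofAdd (1 : ℤ) := by
        rw [← ofAdd_add]
      rw [h, map_mul, MulAut.mul_apply, shift_one, ih]
      ring_nf
  | pred k ih =>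
      have h : (ofAdd (-(k : ℤ))) = ofAdd (-(k : ℤ) - 1) * ofAdd (1 : ℤ) := by
        rw [← ofAdd_add]; ring_nf
      have h2 := ih (j - 1)
      rw [h, map_mul, MulAut.mul_apply, shift_one, sub_add_cancel] at h2
      rw [h2]
      ring_nf


/-- Embedding of ℕ-indexed finsupps into ℤ-indexed ones, multiplicatively. -/
noncomputable def emb : LampBase p →* Multiplicative (ℤ →₀ ZMod p) :=
  AddMonoidHom.toMultiplicative (Finsupp.mapDomain.addMonoidHom (Nat.cast : ℕ → ℤ))

theorem emb_single (i : ℕ) (c : ZMod p) :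
    emb p (ofAdd (single i c)) = ofAdd (single (i : ℤ) c) := by
  show ofAdd (Finsupp.mapDomain (Nat.cast : ℕ → ℤ) (single i c)) = _
  rw [Finsupp.mapDomain_single]

/-- Ext lemma for monoid homs out of `Multiplicative (ℤ →₀ ZMod p)`. -/
theorem multHom_ext {M : Type*} [Monoid M] {F G : Multiplicative (ℤ →₀ ZMod p) →* M}
    (h : ∀ (i : ℤ) (m : ℤ),
      F (ofAdd (single i (m : ZMod p))) = G (ofAdd (single i (m : ZMod p)))) : F = G := by
  refine AddMonoidHom.toMultiplicativeLeft.symm.injective ?_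
  refine Finsupp.addHom_ext fun i c => ?_
  show Additive.ofMul (F (ofAdd (single i c))) = Additive.ofMul (G (ofAdd (single i c)))
  rw [← ZMod.intCast_zmod_cast c]
  exact congrArg _ (h i _)

/-- Ext lemma for monoid homs out of `LampBase p`. -/
theorem natHom_ext {M : Type*} [Monoid M] {F G : LampBase p →* M}
    (h : ∀ (i : ℕ) (m : ℤ),
      F (ofAdd (single i (m : ZMod p))) = G (ofAdd (single i (m : ZMod p)))) : F = G := by
  refine AddMonoidHom.toMultiplicativeLeft.symm.injective ?_
  refine Finsupp.addHom_ext fun i c => ?_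
  show Additive.ofMul (F (ofAdd (single i c))) = Additive.ofMul (G (ofAdd (single i c)))
  rw [← ZMod.intCast_zmod_cast c]
  exact congrArg _ (h i _)

theorem single_int (i : ℤ) (m : ℤ) :
    (ofAdd (single i (m : ZMod p)) : Multiplicative (ℤ →₀ ZMod p)) =
      ofAdd (single i (1 : ZMod p)) ^ m := by
  rw [← ofAdd_zsmul, Finsupp.smul_single, zsmul_eq_mul, mul_one]

theorem single_nat (i : ℕ) (m : ℤ) :
    (ofAdd (single i (m : ZMod p)) : LampBase p) = ofAdd (single i (1 : ZMod p)) ^ m := by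
  rw [← ofAdd_zsmul, Finsupp.smul_single, zsmul_eq_mul, mul_one]

variable (f : LampBase p ≃* lampK p)

/-- Abbreviation for the `hf` hypothesis. -/
def HF : Prop := ∀ i : ℕ,
      ((f (Multiplicative.ofAdd (Finsupp.single i (1 : ZMod p)))) : LampBase p) =
        Multiplicative.ofAdd (Finsupp.single (i + 1) (1 : ZMod p))

theorem f_single (hf : HF p f) (i : ℕ) (m : ℤ) :
    ((f (ofAdd (single i (m : ZMod p)))) : LampBase p) =
      ofAdd (single (i + 1) (m : ZMod p)) := by
  rw [single_nat, map_zpow, SubgroupClass.coe_zpow, hf i, ← single_nat]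

theorem emb_f (hf : HF p f) (x : LampBase p) :
    emb p ((f x : LampBase p)) = lampShift p (ofAdd 1) (emb p x) := by
  have key : (emb p).comp ((lampK p).subtype.comp f.toMonoidHom) =
      (lampShift p (ofAdd 1)).toMonoidHom.comp (emb p) := by
    refine natHom_ext p fun i m => ?_
    show emb p ((f (ofAdd (single i (m : ZMod p))) : LampBase p)) =
      lampShift p (ofAdd 1) (emb p (ofAdd (single i (m : ZMod p))))
    rw [f_single p f hf, emb_single, emb_single, shift_one]
    push_cast
    ring_nf
  exact DFunLike.congr_fun key x


/-- The HNN extension in question. -/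
abbrev HG : Type := HNNExtension (LampBase p) ⊤ (lampK p) (Subgroup.topEquiv.trans f)

open HNNExtension in
theorem relR (x : LampBase p) :
    (t : HG p f) * of x * t⁻¹ = of ((f x : LampBase p)) := by
  have h := HNNExtension.equiv_eq_conj (φ := Subgroup.topEquiv.trans f)
    (⟨x, trivial⟩ : (⊤ : Subgroup (LampBase p)))
  exact h.symm

/-- The conjugates `t^i (a_0) t^{-i}` inside the HNN extension. -/
noncomputable def gg (i : ℤ) : HG p f :=
  HNNExtension.t ^ i * HNNExtension.of (ofAdd (single (0 : ℕ) (1 : ZMod p))) *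
    HNNExtension.t ^ (-i)

theorem tz_gg (z i : ℤ) :
    HNNExtension.t ^ z * gg p f i * HNNExtension.t ^ (-z) = gg p f (i + z) := by
  unfold gg
  group

open HNNExtension in
theorem gg_nat (hf : HF p f) (d : ℕ) :
    gg p f (d : ℤ) = of (ofAdd (single d (1 : ZMod p))) := by
  induction d with
  | zero => simp [gg]
  | succ n ih =>
      have h := tz_gg p f 1 (n : ℤ)
      rw [zpow_one] at h
      have h2 : (t : HG p f) * gg p f n * t⁻¹ = gg p f ((n : ℤ) + 1) := by
        rw [← h]; rw [zpow_neg, zpow_one]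
      rw [ih] at h2
      rw [relR p f] at h2
      rw [hf n] at h2
      rw [Nat.cast_succ]
      exact h2.symm

open HNNExtension in
theorem gg_conj (i : ℤ) :
    gg p f i = MulAut.conj ((t : HG p f) ^ i) (of (ofAdd (single (0 : ℕ) (1 : ZMod p)))) := by
  rw [MulAut.conj_apply, ← zpow_neg]
  rfl

theorem gg_comm (hf : HF p f) (i j : ℤ) : Commute (gg p f i) (gg p f j) := by
  have key : ∀ (i : ℤ) (d : ℕ), Commute (gg p f i) (gg p f (i + d)) := by
    intro i d
    have h1 : gg p f (i + d) = MulAut.conj ((HNNExtension.t : HG p f) ^ i) (gg p f d) := by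
      rw [add_comm, ← tz_gg p f i (d : ℤ), MulAut.conj_apply, ← zpow_neg]
    have h2 : Commute (HNNExtension.of (ofAdd (single (0 : ℕ) (1 : ZMod p))) : HG p f)
        (HNNExtension.of (ofAdd (single d (1 : ZMod p)))) :=
      (Commute.all _ _).map HNNExtension.of
    rw [gg_conj p f i, h1, gg_nat p f hf d]
    exact h2.map (MulAut.conj ((HNNExtension.t : HG p f) ^ i)).toMonoidHom
  rcases le_total i j with h | h
  · obtain ⟨d, rfl⟩ : ∃ d : ℕ, j = i + d := ⟨(j - i).toNat, by omega⟩
    exact key i d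
  · obtain ⟨d, rfl⟩ : ∃ d : ℕ, i = j + d := ⟨(i - j).toNat, by omega⟩
    exact (key j d).symm

theorem gg_pow (i : ℤ) : gg p f i ^ p = 1 := by
  have ha : (ofAdd (single (0 : ℕ) (1 : ZMod p)) : LampBase p) ^ p = 1 := by
    rw [← ofAdd_nsmul, Finsupp.smul_single, nsmul_eq_mul, mul_one, ZMod.natCast_self,
      Finsupp.single_zero]
    rfl
  rw [gg_conj p f i, ← map_pow, ← map_pow, ha, map_one, map_one]

/-- The abelian subgroup generated by the `gg i`. -/
noncomputable def C : Subgroup (HG p f) := Subgroup.closure (Set.range (gg p f))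

/-- The subgroup `C` is commutative. -/
noncomputable def Cinst (hf : HF p f) : CommGroup (C p f) :=
  Subgroup.closureCommGroupOfComm (fun x hx y hy => by
    obtain ⟨i, rfl⟩ := hx
    obtain ⟨j, rfl⟩ := hy
    exact gg_comm p f hf i j)

/-- The generators of `C` as elements of `C`. -/
noncomputable def ggC (i : ℤ) : C p f :=
  ⟨gg p f i, Subgroup.subset_closure ⟨i, rfl⟩⟩

/-- The additive version of the base map. -/
noncomputable def psiAdd (hf : HF p f) : (ℤ →₀ ZMod p) →+ Additive (C p f) :=
  letI := Cinst p f hf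
  Finsupp.liftAddHom fun i => ZMod.lift p
    ⟨zmultiplesHom _ (Additive.ofMul (ggC p f i)), by
      have h : ggC p f i ^ (p : ℤ) = 1 := by
        refine Subtype.ext ?_
        rw [SubgroupClass.coe_zpow, zpow_natCast]
        exact gg_pow p f i
      show (p : ℤ) • Additive.ofMul (ggC p f i) = 0
      rw [← ofMul_zpow, h]
      rfl⟩

theorem psiAdd_single (hf : HF p f) (i : ℤ) (m : ℤ) :
    psiAdd p f hf (single i (m : ZMod p)) = (m : ℤ) • Additive.ofMul (ggC p f i) := by
  letI := Cinst p f hf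
  rw [psiAdd]
  erw [Finsupp.liftAddHom_apply_single]
  erw [ZMod.lift_coe]
  rfl

/-- The base map of the homomorphism from the lamplighter to the HNN extension. -/
noncomputable def psiBase (hf : HF p f) : Multiplicative (ℤ →₀ ZMod p) →* HG p f :=
  (C p f).subtype.comp (AddMonoidHom.toMultiplicativeLeft (psiAdd p f hf))

theorem psiBase_single (hf : HF p f) (i : ℤ) (m : ℤ) :
    psiBase p f hf (ofAdd (single i (m : ZMod p))) = gg p f i ^ m := by
  have h1 : psiBase p f hf (ofAdd (single i (m : ZMod p))) =
      ((Additive.toMul (psiAdd p f hf (single i (m : ZMod p))) : C p f) : HG p f) := rfl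
  rw [h1, psiAdd_single]
  letI := Cinst p f hf
  rw [toMul_zsmul]
  show ((ggC p f i ^ (m : ℤ) : C p f) : HG p f) = _
  rw [SubgroupClass.coe_zpow]
  rfl


/-- The base map `D → L_p` of the homomorphism from the HNN extension to the lamplighter. -/
noncomputable def phiD : LampBase p →* Lamplighter p :=
  SemidirectProduct.inl.comp (emb p)

open HNNExtension in
theorem hPhi (hf : HF p f) : ∀ a : (⊤ : Subgroup (LampBase p)),
    Lamplighter.t p * phiD p a =
      phiD p (((Subgroup.topEquiv.trans f) a : lampK p) : LampBase p) * Lamplighter.t p := by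
  rintro ⟨x, -⟩
  show Lamplighter.t p * SemidirectProduct.inl (emb p x) =
    SemidirectProduct.inl (emb p ((f x : LampBase p))) * Lamplighter.t p
  rw [emb_f p f hf x]
  rw [Lamplighter.t]
  have h := SemidirectProduct.inl_aut (φ := lampShift p) (ofAdd (1 : ℤ)) (emb p x)
  rw [h, map_inv, inv_mul_cancel_right]

/-- The homomorphism from the HNN extension to the lamplighter. -/
noncomputable def Phi (hf : HF p f) : HG p f →* Lamplighter p :=
  HNNExtension.lift (phiD p) (Lamplighter.t p) (hPhi p f hf)

theorem tL_zpow (z : ℤ) : Lamplighter.t p ^ z = SemidirectProduct.inr (ofAdd z) := by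
  rw [Lamplighter.t, ← map_zpow]
  norm_num [← ofAdd_zsmul]

theorem conj_inl (z : ℤ) (y : Multiplicative (ℤ →₀ ZMod p)) :
    Lamplighter.t p ^ z * SemidirectProduct.inl y * Lamplighter.t p ^ (-z) =
      SemidirectProduct.inl (lampShift p (ofAdd z) y) := by
  rw [tL_zpow, tL_zpow]
  have h := SemidirectProduct.inl_aut (φ := lampShift p) (ofAdd z) y
  rw [h, ofAdd_neg]


open HNNExtension in
theorem hPsi (hf : HF p f) : ∀ g : Multiplicative ℤ,
    (psiBase p f hf).comp ((lampShift p) g).toMonoidHom =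
      (MulAut.conj ((zpowersHom (HG p f)) t g)).toMonoidHom.comp (psiBase p f hf) := by
  intro g
  refine multHom_ext p fun i m => ?_
  show psiBase p f hf (lampShift p g (ofAdd (single i (m : ZMod p)))) =
    MulAut.conj (zpowersHom (HG p f) t g) (psiBase p f hf (ofAdd (single i (m : ZMod p))))
  rw [← ofAdd_toAdd g, shift_single, psiBase_single, psiBase_single, zpowersHom_apply,
    toAdd_ofAdd, MulAut.conj_apply, ← zpow_neg, ← tz_gg p f (toAdd g) i, zpow_neg, conj_zpow]

/-- The homomorphism from the lamplighter to the HNN extension. -/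
noncomputable def Psi (hf : HF p f) : Lamplighter p →* HG p f :=
  SemidirectProduct.lift (psiBase p f hf) (zpowersHom (HG p f) HNNExtension.t) (hPsi p f hf)

open HNNExtension in
theorem of_single (hf : HF p f) (i : ℕ) (m : ℤ) :
    (of (ofAdd (single i (m : ZMod p))) : HG p f) = gg p f (i : ℤ) ^ m := by
  rw [single_nat, map_zpow, gg_nat p f hf]

open HNNExtension in
theorem h_left (hf : HF p f) :
    (Psi p f hf).comp (Phi p f hf) = MonoidHom.id (HG p f) := by
  refine HNNExtension.hom_ext ?_ ?_
  · refine natHom_ext p fun i m => ?_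
    show Psi p f hf (Phi p f hf (of (ofAdd (single i (m : ZMod p))))) =
      of (ofAdd (single i (m : ZMod p)))
    rw [Phi, HNNExtension.lift_of]
    show Psi p f hf (SemidirectProduct.inl (emb p (ofAdd (single i (m : ZMod p))))) = _
    rw [emb_single, Psi, SemidirectProduct.lift_inl, psiBase_single, of_single p f hf]
  · show Psi p f hf (Phi p f hf t) = t
    rw [Phi, HNNExtension.lift_t]
    show Psi p f hf (SemidirectProduct.inr (ofAdd (1 : ℤ))) = t
    rw [Psi, SemidirectProduct.lift_inr, zpowersHom_apply, toAdd_ofAdd, zpow_one]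

open HNNExtension in
theorem h_right (hf : HF p f) :
    (Phi p f hf).comp (Psi p f hf) = MonoidHom.id (Lamplighter p) := by
  refine SemidirectProduct.hom_ext ?_ ?_
  · refine multHom_ext p fun i m => ?_
    show Phi p f hf (Psi p f hf (SemidirectProduct.inl (ofAdd (single i (m : ZMod p))))) =
      SemidirectProduct.inl (ofAdd (single i (m : ZMod p)))
    rw [Psi, SemidirectProduct.lift_inl, psiBase_single, map_zpow]
    have hgg : Phi p f hf (gg p f i) = SemidirectProduct.inl (ofAdd (single i (1 : ZMod p))) := by
      rw [gg, Phi]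
      rw [map_mul, map_mul, map_zpow, map_zpow, HNNExtension.lift_t, HNNExtension.lift_of]
      show Lamplighter.t p ^ i * SemidirectProduct.inl (emb p (ofAdd (single (0:ℕ) (1 : ZMod p))))
          * Lamplighter.t p ^ (-i) = _
      rw [emb_single, conj_inl, shift_single, Nat.cast_zero, zero_add]
    rw [hgg, ← map_zpow, ← single_int]
  · refine MonoidHom.ext_mint ?_
    show Phi p f hf (Psi p f hf (SemidirectProduct.inr (ofAdd (1:ℤ)))) =
      SemidirectProduct.inr (ofAdd (1:ℤ))
    rw [Psi, SemidirectProduct.lift_inr, zpowersHom_apply, toAdd_ofAdd, zpow_one, Phi,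
      HNNExtension.lift_t, Lamplighter.t]

end LampAux


/-- Let `p ≥ 2`, `D = ⨁_{i∈ℕ} ℤ/pℤ` with canonical generators
`a_0, a_1, …`, `K ≤ D` the subgroup of elements vanishing at index `0`, and
`f : D → K` the shift isomorphism determined by `f(a_i) = a_{i+1}`. Then `[D : K] = p`
and the HNN extension `D*_f` (with `A = D` and `B = K`) is isomorphic to the
lamplighter group `L_p`. -/
theorem hnn_of_shift_iso_lamplighter (p : ℕ) (hp : 2 ≤ p) (f : LampBase p ≃* lampK p)
    (hf : ∀ i : ℕ,
      ((f (Multiplicative.ofAdd (Finsupp.single i (1 : ZMod p)))) : LampBase p) =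
        Multiplicative.ofAdd (Finsupp.single (i + 1) (1 : ZMod p))) :
    (lampK p).index = p ∧
      Nonempty (HNNExtension (LampBase p) ⊤ (lampK p) (Subgroup.topEquiv.trans f) ≃*
        Lamplighter p) := by
  constructor
  · have hk : lampK p =
        MonoidHom.ker (AddMonoidHom.toMultiplicative (Finsupp.applyAddHom (0 : ℕ))) :=
      (MonoidHom.coe_toMultiplicative_ker _).symm
    rw [hk, Subgroup.index_ker]
    have hsurj : Function.Surjective
        (AddMonoidHom.toMultiplicative (Finsupp.applyAddHom (0 : ℕ)) :
          LampBase p →* Multiplicative (ZMod p)) := by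
      intro y
      refine ⟨ofAdd (Finsupp.single (0 : ℕ) (toAdd y)), ?_⟩
      show ofAdd ((Finsupp.single (0 : ℕ) (toAdd y)) 0) = y
      rw [Finsupp.single_eq_same, ofAdd_toAdd]
    rw [MonoidHom.range_eq_top.2 hsurj, Subgroup.card_top,
      Nat.card_congr Multiplicative.toAdd, Nat.card_zmod]
  · exact ⟨MonoidHom.toMulEquiv (LampAux.Phi p f hf) (LampAux.Psi p f hf)
      (LampAux.h_left p f hf) (LampAux.h_right p f hf)⟩
end

section
/- Let G be a group generated by a finite set S, and suppose x_1, …, x_r are nontrivial elements of G that freely generate a free monoid inside G. Set ℓ_i = ℓ_{G,S}(x_i) for i = 1, …, r and m = max{ℓ_1, …, ℓ_r}. Then ω(G,S) is greater than or equal to the unique positive real root of the polynomial Q(z) = z^m − Σ_{i=1}^{r} z^{m−ℓ_i}. -/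
/-- Word length `ℓ_{G,S}(g)`: least `n` such that `g` is a product of `n` elements
of `S ∪ S⁻¹`. -/
noncomputable def wordLength {G : Type*} [Group G] (S : Set G) (g : G) : ℕ :=
  sInf {n | ∃ w : List G, w.length = n ∧ (∀ x ∈ w, x ∈ S ∨ x⁻¹ ∈ S) ∧ w.prod = g}

/-- Growth function `F_{G,S}(n)`: number of elements in the ball of radius `n`. -/
noncomputable def growthFun {G : Type*} [Group G] (S : Set G) (n : ℕ) : ℕ :=
  Set.ncard {g : G | wordLength S g ≤ n}

/-- Exponential growth rate `ω(G,S) = lim_{n→∞} F_{G,S}(n)^(1/n)`. -/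
noncomputable def growthRate {G : Type*} [Group G] (S : Set G) : ℝ :=
  Filter.limUnder Filter.atTop fun n : ℕ => (growthFun S n : ℝ) ^ ((1 : ℝ) / n)

/-- `S` generates the group `G`. -/
def Generates {G : Type*} [Group G] (S : Set G) : Prop := Subgroup.closure S = ⊤

/-- Minimal exponential growth rate `Ω(G) = inf {ω(G,S) : S finite generating set}`. -/
noncomputable def minGrowthRate (G : Type*) [Group G] : ℝ :=
  sInf {r : ℝ | ∃ S : Set G, S.Finite ∧ Generates S ∧ growthRate S = r}

section Helpers

variable {G : Type*} [Group G] {S : Set G}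

private lemma GR.exists_word (hgen : Generates S) (g : G) :
    ∃ w : List G, (∀ x ∈ w, x ∈ S ∨ x⁻¹ ∈ S) ∧ w.prod = g := by
  have hg : g ∈ Subgroup.closure S := by rw [hgen]; trivial
  induction hg using Subgroup.closure_induction with
  | mem s hs => exact ⟨[s], by simp [hs], by simp⟩
  | one => exact ⟨[], by simp, by simp⟩
  | mul a b _ _ iha ihb =>
      obtain ⟨w1, h1, e1⟩ := iha
      obtain ⟨w2, h2, e2⟩ := ihb
      refine ⟨w1 ++ w2, ?_, by simp [e1, e2]⟩
      intro y hy
      rcases List.mem_append.1 hy with h | h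
      · exact h1 y h
      · exact h2 y h
  | inv a _ ih =>
      obtain ⟨w, h, e⟩ := ih
      refine ⟨(w.map fun z => z⁻¹).reverse, ?_, ?_⟩
      · intro y hy
        simp only [List.mem_reverse, List.mem_map] at hy
        obtain ⟨z, hz, rfl⟩ := hy
        rcases h z hz with h' | h'
        · exact Or.inr (by simpa using h')
        · exact Or.inl h'
      · rw [← e, ← List.prod_inv_reverse]

private lemma GR.wordLength_le {w : List G} (hw : ∀ x ∈ w, x ∈ S ∨ x⁻¹ ∈ S) :
    wordLength S w.prod ≤ w.length :=
  Nat.sInf_le ⟨w, rfl, hw, rfl⟩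

private lemma GR.exists_min_word (hgen : Generates S) (g : G) :
    ∃ w : List G, w.length = wordLength S g ∧ (∀ x ∈ w, x ∈ S ∨ x⁻¹ ∈ S) ∧ w.prod = g := by
  obtain ⟨w, h1, h2⟩ := GR.exists_word hgen g
  have hne : {n | ∃ w : List G, w.length = n ∧ (∀ x ∈ w, x ∈ S ∨ x⁻¹ ∈ S) ∧ w.prod = g}.Nonempty :=
    ⟨w.length, w, rfl, h1, h2⟩
  exact Nat.sInf_mem hne

private lemma GR.wordLength_mul_le (hgen : Generates S) (g h : G) :
    wordLength S (g * h) ≤ wordLength S g + wordLength S h := by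
  obtain ⟨w1, e1, h1, p1⟩ := GR.exists_min_word hgen g
  obtain ⟨w2, e2, h2, p2⟩ := GR.exists_min_word hgen h
  have : wordLength S ((w1 ++ w2).prod) ≤ (w1 ++ w2).length := by
    apply GR.wordLength_le
    intro y hy
    rcases List.mem_append.1 hy with hm | hm
    · exact h1 y hm
    · exact h2 y hm
  simpa [p1, p2, e1, e2] using this

private lemma GR.wordLength_one : wordLength S (1 : G) = 0 :=
  Nat.le_zero.1 (by simpa using GR.wordLength_le (w := ([] : List G)) (by simp))

private lemma GR.wordLength_pos (hgen : Generates S) {g : G} (hg : g ≠ 1) :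
    1 ≤ wordLength S g := by
  by_contra hlt
  push_neg at hlt
  interval_cases h : wordLength S g
  obtain ⟨w, e, _, p⟩ := GR.exists_min_word hgen g
  rw [h] at e
  rw [List.length_eq_zero_iff] at e
  subst e
  simp at p
  exact hg p.symm

private lemma GR.wordLength_list_prod_le (hgen : Generates S) (l : List G) :
    wordLength S l.prod ≤ (l.map (wordLength S)).sum := by
  induction l with
  | nil => simp [GR.wordLength_one]
  | cons a t ih =>
      simp only [List.prod_cons, List.map_cons, List.sum_cons]
      exact (GR.wordLength_mul_le hgen a t.prod).trans (by omega)

private lemma GR.ball_finite (hS : S.Finite) (hgen : Generates S) (n : ℕ) :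
    {g : G | wordLength S g ≤ n}.Finite := by
  classical
  have hT : (S ∪ S⁻¹).Finite := hS.union hS.inv
  have : Finite ↥(S ∪ S⁻¹) := hT.to_subtype
  have hlists : {l : List ↥(S ∪ S⁻¹) | l.length ≤ n}.Finite := List.finite_length_le _ n
  have himg : {g : G | wordLength S g ≤ n} ⊆
      (fun l : List ↥(S ∪ S⁻¹) => (l.map Subtype.val).prod) '' {l | l.length ≤ n} := by
    intro g hg
    obtain ⟨w, e, hw, p⟩ := GR.exists_min_word hgen g
    refine ⟨w.attach.map fun z => ⟨z.1, ?_⟩, ?_, ?_⟩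
    · rcases hw z.1 z.2 with h | h
      · exact Or.inl h
      · exact Or.inr (by simpa using h)
    · simpa [e] using hg
    · simp [p]
  exact (hlists.image _).subset himg

private lemma GR.ncard_prod {α : Type*} (s t : Set α) : (s ×ˢ t).ncard = s.ncard * t.ncard := by
  rw [← Nat.card_coe_set_eq, ← Nat.card_coe_set_eq, ← Nat.card_coe_set_eq,
    Nat.card_congr (Equiv.Set.prod s t), Nat.card_prod]

private lemma GR.one_le_growthFun (hS : S.Finite) (hgen : Generates S) (n : ℕ) :
    1 ≤ growthFun S n := by
  have : (1 : G) ∈ {g : G | wordLength S g ≤ n} := by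
    simp [Set.mem_setOf_eq, GR.wordLength_one]
  exact Set.ncard_pos (GR.ball_finite hS hgen n) |>.2 ⟨1, this⟩

private lemma GR.growthFun_submul (hS : S.Finite) (hgen : Generates S) (a b : ℕ) :
    growthFun S (a + b) ≤ growthFun S a * growthFun S b := by
  have hsub : {g : G | wordLength S g ≤ a + b} ⊆
      Set.image2 (· * ·) {g : G | wordLength S g ≤ a} {g : G | wordLength S g ≤ b} := by
    intro g hg
    obtain ⟨w, e, hw, p⟩ := GR.exists_min_word hgen g
    refine ⟨(w.take a).prod, ?_, (w.drop a).prod, ?_, ?_⟩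
    · refine le_trans (GR.wordLength_le fun y hy => hw y (List.mem_of_mem_take hy)) ?_
      simp
    · refine le_trans (GR.wordLength_le fun y hy => hw y (List.mem_of_mem_drop hy)) ?_
      simp only [List.length_drop]
      have : w.length ≤ a + b := by rw [e]; exact hg
      omega
    · show (w.take a).prod * (w.drop a).prod = g
      rw [← List.prod_append, List.take_append_drop, p]
  calc growthFun S (a + b) ≤ (Set.image2 (· * ·) {g : G | wordLength S g ≤ a}
        {g : G | wordLength S g ≤ b}).ncard :=
        Set.ncard_le_ncard hsub ((GR.ball_finite hS hgen a).image2 _ (GR.ball_finite hS hgen b))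
    _ ≤ growthFun S a * growthFun S b := by
        rw [← Set.image_prod]
        refine le_trans (Set.ncard_image_le ((GR.ball_finite hS hgen a).prod
          (GR.ball_finite hS hgen b))) ?_
        rw [GR.ncard_prod]
        rfl

end Helpers

section Count
variable {r : ℕ} (ℓ : Fin r → ℕ)

private lemma GR.wset_finite (hℓ : ∀ i, 1 ≤ ℓ i) (n : ℕ) :
    {w : List (Fin r) | (w.map ℓ).sum ≤ n}.Finite := by
  refine (List.finite_length_le (Fin r) n).subset fun w hw => ?_
  have : w.length ≤ (w.map ℓ).sum := by
    have := List.length_le_sum_of_one_le (w.map ℓ) (by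
      intro i hi; obtain ⟨j, _, rfl⟩ := List.mem_map.1 hi; exact hℓ j)
    simpa using this
  exact this.trans hw

private lemma GR.wset_card_rec (hℓ : ∀ i, 1 ≤ ℓ i) {n : ℕ} (hn : ∀ i, ℓ i ≤ n) :
    ∑ i : Fin r, ({w : List (Fin r) | (w.map ℓ).sum ≤ n - ℓ i}).ncard ≤
      ({w : List (Fin r) | (w.map ℓ).sum ≤ n}).ncard := by
  classical
  set A : ℕ → Finset (List (Fin r)) := fun k => (GR.wset_finite ℓ hℓ k).toFinset with hA
  have hconsinj : ∀ i : Fin r, Function.Injective (List.cons i) := by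
    intro i a b h; simpa using h
  have hsubset : (Finset.univ.biUnion fun i => (A (n - ℓ i)).image (List.cons i)) ⊆ A n := by
    intro w hw
    simp only [Finset.mem_biUnion, Finset.mem_image, Finset.mem_univ, true_and, hA,
      Set.Finite.mem_toFinset, Set.mem_setOf_eq] at hw ⊢
    obtain ⟨i, v, hv, rfl⟩ := hw
    simp only [List.map_cons, List.sum_cons]
    have := hn i
    omega
  have hdisj : ∀ i ∈ Finset.univ, ∀ j ∈ (Finset.univ : Finset (Fin r)), i ≠ j →
      Disjoint ((A (n - ℓ i)).image (List.cons i)) ((A (n - ℓ j)).image (List.cons j)) := by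
    intro i _ j _ hij
    rw [Finset.disjoint_left]
    rintro w hwi hwj
    simp only [Finset.mem_image] at hwi hwj
    obtain ⟨a, _, ha⟩ := hwi
    obtain ⟨b, _, hb⟩ := hwj
    rw [← ha] at hb
    exact hij ((List.cons.inj hb.symm).1)
  calc ∑ i : Fin r, ({w : List (Fin r) | (w.map ℓ).sum ≤ n - ℓ i}).ncard
      = ∑ i : Fin r, ((A (n - ℓ i)).image (List.cons i)).card := by
        refine Finset.sum_congr rfl fun i _ => ?_
        rw [Finset.card_image_of_injective _ (hconsinj i),
          Set.ncard_eq_toFinset_card _ (GR.wset_finite ℓ hℓ (n - ℓ i))]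
    _ = (Finset.univ.biUnion fun i => (A (n - ℓ i)).image (List.cons i)).card :=
        (Finset.card_biUnion hdisj).symm
    _ ≤ (A n).card := Finset.card_le_card hsubset
    _ = ({w : List (Fin r) | (w.map ℓ).sum ≤ n}).ncard :=
        (Set.ncard_eq_toFinset_card _ (GR.wset_finite ℓ hℓ n)).symm

private lemma GR.wset_nonempty_card (hℓ : ∀ i, 1 ≤ ℓ i) (n : ℕ) :
    1 ≤ ({w : List (Fin r) | (w.map ℓ).sum ≤ n}).ncard := by
  refine Set.ncard_pos (GR.wset_finite ℓ hℓ n) |>.2 ⟨[], ?_⟩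
  simp

private lemma GR.pow_le_wset_card {ρ : ℝ} (hρ : 0 < ρ) (hρ1 : 1 ≤ ρ) {m : ℕ}
    (hm : ∀ i, ℓ i ≤ m) (hℓ : ∀ i, 1 ≤ ℓ i)
    (hsum : ρ ^ m = ∑ i : Fin r, ρ ^ (m - ℓ i)) (n : ℕ) :
    ρ ^ n ≤ ρ ^ m * ({w : List (Fin r) | (w.map ℓ).sum ≤ n}).ncard := by
  induction n using Nat.strong_induction_on with
  | _ n ih =>
    rcases lt_or_ge n m with hnm | hnm
    · calc ρ ^ n ≤ ρ ^ m := pow_le_pow_right₀ hρ1 hnm.le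
        _ = ρ ^ m * 1 := (mul_one _).symm
        _ ≤ _ := by
            have := GR.wset_nonempty_card ℓ hℓ n
            have h1 : (1:ℝ) ≤ (({w : List (Fin r) | (w.map ℓ).sum ≤ n}).ncard : ℝ) := by
              exact_mod_cast this
            exact mul_le_mul_of_nonneg_left h1 (le_of_lt (pow_pos hρ m))
    · have hn : ∀ i, ℓ i ≤ n := fun i => (hm i).trans hnm
      have hexp : ∀ i : Fin r, (n - m) + (m - ℓ i) = n - ℓ i := by
        intro i; have := hm i; have := hn i; omega
      have hEq : ρ ^ n = ∑ i : Fin r, ρ ^ (n - ℓ i) := by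
        calc ρ ^ n = ρ ^ (n - m) * ρ ^ m := by rw [← pow_add]; congr 1; omega
          _ = ∑ i : Fin r, ρ ^ (n - m) * ρ ^ (m - ℓ i) := by rw [hsum, Finset.mul_sum]
          _ = ∑ i : Fin r, ρ ^ (n - ℓ i) := by
              refine Finset.sum_congr rfl fun i _ => ?_
              rw [← pow_add, hexp i]
      rw [hEq]
      calc ∑ i : Fin r, ρ ^ (n - ℓ i)
          ≤ ∑ i : Fin r, ρ ^ m * ({w : List (Fin r) | (w.map ℓ).sum ≤ n - ℓ i}).ncard := by
            refine Finset.sum_le_sum fun i _ => ih _ ?_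
            have := hℓ i; have := hn i; omega
        _ = ρ ^ m * ∑ i : Fin r, (({w : List (Fin r) | (w.map ℓ).sum ≤ n - ℓ i}).ncard : ℝ) := by
            rw [Finset.mul_sum]
        _ ≤ ρ ^ m * ({w : List (Fin r) | (w.map ℓ).sum ≤ n}).ncard := by
            refine mul_le_mul_of_nonneg_left ?_ (le_of_lt (pow_pos hρ m))
            exact_mod_cast GR.wset_card_rec ℓ hℓ hn

end Count

/-- Let `G` be a group generated by a finite set `S`, and suppose
`x_1, …, x_r` are nontrivial elements of `G` freely generating a free monoid inside `G`.
Set `ℓ_i = ℓ_{G,S}(x_i)` and `m = max ℓ_i`. Then `ω(G,S)` is at least the unique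
positive root of `Q(z) = z^m - Σ_{i=1}^r z^(m - ℓ_i)`. -/
theorem growth_rate_ge_root_of_free_submonoid {G : Type*} [Group G]
    (S : Set G) (hS : S.Finite) (hgen : Generates S)
    (r : ℕ) (hr : 1 ≤ r) (x : Fin r → G) (hx : ∀ i, x i ≠ 1)
    (hfree : Function.Injective (FreeMonoid.lift x))
    (ρ : ℝ) (hρ : 0 < ρ)
    (hroot : ρ ^ (Finset.univ.sup fun i => wordLength S (x i)) -
      ∑ i : Fin r,
        ρ ^ ((Finset.univ.sup fun j => wordLength S (x j)) - wordLength S (x i)) = 0) :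
    ρ ≤ growthRate S := by
  classical
  set ℓ : Fin r → ℕ := fun i => wordLength S (x i) with hℓdef
  set m : ℕ := Finset.univ.sup ℓ with hmdef
  have hℓ : ∀ i, 1 ≤ ℓ i := fun i => GR.wordLength_pos hgen (hx i)
  have hm : ∀ i, ℓ i ≤ m := fun i => Finset.le_sup (Finset.mem_univ i)
  have hsum : ρ ^ m = ∑ i : Fin r, ρ ^ (m - ℓ i) := by
    have := sub_eq_zero.1 hroot
    exact this
  -- ρ ≥ 1
  have hne : (Finset.univ : Finset (Fin r)).Nonempty := ⟨⟨0, hr⟩, Finset.mem_univ _⟩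
  obtain ⟨i0, _, hi0⟩ := Finset.exists_mem_eq_sup Finset.univ hne ℓ
  have hρ1 : 1 ≤ ρ := by
    have h1 : (1:ℝ) ≤ ρ ^ m := by
      have : ρ ^ (m - ℓ i0) ≤ ∑ i : Fin r, ρ ^ (m - ℓ i) :=
        Finset.single_le_sum (f := fun i => ρ ^ (m - ℓ i))
          (fun i _ => le_of_lt (pow_pos hρ _)) (Finset.mem_univ i0)
      rw [← hsum] at this
      have hmi : m - ℓ i0 = 0 := by rw [hmdef, hi0]; omega
      rwa [hmi, pow_zero] at this
    have hm1 : m ≠ 0 := by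
      have := hℓ i0
      have := hm i0
      omega
    exact (one_le_pow_iff_of_nonneg (le_of_lt hρ) hm1).1 h1
  -- key lower bound on the growth function
  have hkey : ∀ n : ℕ, ρ ^ n ≤ ρ ^ m * growthFun S n := by
    intro n
    refine (GR.pow_le_wset_card ℓ hρ hρ1 hm hℓ hsum n).trans ?_
    have hWF : ({w : List (Fin r) | (w.map ℓ).sum ≤ n}).ncard ≤ growthFun S n := by
      have hinj : Function.Injective fun w : List (Fin r) => (w.map x).prod := by
        intro a b h
        have ha : (FreeMonoid.lift x) (FreeMonoid.ofList a) = (a.map x).prod := by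
          rw [FreeMonoid.lift_apply]
          simp
        have hb : (FreeMonoid.lift x) (FreeMonoid.ofList b) = (b.map x).prod := by
          rw [FreeMonoid.lift_apply]
          simp
        have := hfree (ha.trans (h.trans hb.symm))
        simpa using congrArg FreeMonoid.toList this
      have hsub : (fun w : List (Fin r) => (w.map x).prod) ''
          {w : List (Fin r) | (w.map ℓ).sum ≤ n} ⊆ {g : G | wordLength S g ≤ n} := by
        rintro g ⟨w, hw, rfl⟩
        have h1 : wordLength S (w.map x).prod ≤ ((w.map x).map (wordLength S)).sum :=
          GR.wordLength_list_prod_le hgen (w.map x)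
        have h2 : ((w.map x).map (wordLength S)).sum = (w.map ℓ).sum := by
          rw [List.map_map]
          rfl
        exact le_trans h1 (h2 ▸ hw)
      calc ({w : List (Fin r) | (w.map ℓ).sum ≤ n}).ncard
          = ((fun w : List (Fin r) => (w.map x).prod) ''
              {w : List (Fin r) | (w.map ℓ).sum ≤ n}).ncard :=
            (Set.ncard_image_of_injective _ hinj).symm
        _ ≤ growthFun S n := Set.ncard_le_ncard hsub (GR.ball_finite hS hgen n)
    have := mul_le_mul_of_nonneg_left (show (({w : List (Fin r) | (w.map ℓ).sum ≤ n}).ncard : ℝ)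
      ≤ (growthFun S n : ℝ) from by exact_mod_cast hWF) (le_of_lt (pow_pos hρ m))
    exact this
  -- Fekete
  set u : ℕ → ℝ := fun n => Real.log (growthFun S n) with hudef
  have hu0 : ∀ n, 0 ≤ u n := by
    intro n
    apply Real.log_nonneg
    exact_mod_cast GR.one_le_growthFun hS hgen n
  have hFpos : ∀ n, (0:ℝ) < (growthFun S n : ℝ) := by
    intro n
    exact_mod_cast Nat.lt_of_lt_of_le Nat.zero_lt_one (GR.one_le_growthFun hS hgen n)
  have hsubadd : Subadditive u := by
    intro a b
    have h1 : (growthFun S (a + b) : ℝ) ≤ (growthFun S a : ℝ) * (growthFun S b : ℝ) := by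
      exact_mod_cast GR.growthFun_submul hS hgen a b
    calc u (a + b) ≤ Real.log ((growthFun S a : ℝ) * (growthFun S b : ℝ)) :=
          Real.log_le_log (hFpos _) h1
      _ = u a + u b := Real.log_mul (ne_of_gt (hFpos a)) (ne_of_gt (hFpos b))
  have hbdd : BddBelow (Set.range fun n : ℕ => u n / n) := by
    refine ⟨0, ?_⟩
    rintro y ⟨n, rfl⟩
    exact div_nonneg (hu0 n) (Nat.cast_nonneg n)
  have htend := hsubadd.tendsto_lim hbdd
  -- growthRate S = exp (lim)
  have heq : ∀ n : ℕ, (growthFun S n : ℝ) ^ ((1:ℝ)/n) = Real.exp (u n / n) := by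
    intro n
    rw [Real.rpow_def_of_pos (hFpos n)]
    rw [hudef]
    congr 1
    rw [mul_one_div]
  have htend2 : Filter.Tendsto (fun n : ℕ => (growthFun S n : ℝ) ^ ((1:ℝ)/n)) Filter.atTop
      (nhds (Real.exp hsubadd.lim)) := by
    have : Filter.Tendsto (fun n : ℕ => Real.exp (u n / n)) Filter.atTop
        (nhds (Real.exp hsubadd.lim)) :=
      (Real.continuous_exp.continuousAt.tendsto).comp htend
    exact this.congr fun n => (heq n).symm
  have hgr : growthRate S = Real.exp hsubadd.lim := htend2.limUnder_eq
  -- lim ≥ log ρ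
  have hlog : Real.log ρ ≤ hsubadd.lim := by
    have hlow : ∀ n : ℕ, 1 ≤ n →
        Real.log ρ - (m : ℝ) * Real.log ρ / n ≤ u n / n := by
      intro n hn
      have hnpos : (0:ℝ) < n := by exact_mod_cast hn
      have hun : (n : ℝ) * Real.log ρ - (m : ℝ) * Real.log ρ ≤ u n := by
        have h1 : ρ ^ n / ρ ^ m ≤ (growthFun S n : ℝ) := by
          rw [div_le_iff₀ (pow_pos hρ m)]
          calc ρ ^ n ≤ ρ ^ m * growthFun S n := hkey n
            _ = (growthFun S n : ℝ) * ρ ^ m := mul_comm _ _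
        have h2 : Real.log (ρ ^ n / ρ ^ m) ≤ u n :=
          Real.log_le_log (div_pos (pow_pos hρ n) (pow_pos hρ m)) h1
        rwa [Real.log_div (ne_of_gt (pow_pos hρ n)) (ne_of_gt (pow_pos hρ m)),
          Real.log_pow, Real.log_pow] at h2
      have hrw : Real.log ρ - (m : ℝ) * Real.log ρ / n
          = ((n : ℝ) * Real.log ρ - (m : ℝ) * Real.log ρ) / n := by
        field_simp
      rw [hrw]
      gcongr
    have htendlow : Filter.Tendsto (fun n : ℕ => Real.log ρ - (m : ℝ) * Real.log ρ / n)
        Filter.atTop (nhds (Real.log ρ)) := by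
      have h0 : Filter.Tendsto (fun n : ℕ => ((m : ℝ) * Real.log ρ) / n) Filter.atTop
          (nhds 0) := tendsto_const_div_atTop_nhds_zero_nat _
      simpa using tendsto_const_nhds.sub h0
    refine le_of_tendsto_of_tendsto htendlow htend ?_
    filter_upwards [Filter.eventually_ge_atTop 1] with n hn
    exact hlow n hn
  rw [hgr]
  calc ρ = Real.exp (Real.log ρ) := (Real.exp_log hρ).symm
    _ ≤ Real.exp hsubadd.lim := Real.exp_le_exp.2 hlog
end

section
/- For every integer k ≥ 1 the inequalities (1+√5)/2 ≤ ω_k ≤ δ_k < 1 + √2 hold, where ω_k is the unique positive real root of T_k(x) = x^{k+1} − x^k − 2x^{k−1} − ⋯ − 2x − 2 and δ_k is the unique positive real root of D_k(x) = x^{2k+1} − 2x^{2k} − 2x^{2k−2} − ⋯ − 2x² − 2. -/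
set_option maxHeartbeats 2000000 in
/-- For every integer `k ≥ 1` the inequalities
`(1+√5)/2 ≤ ω_k ≤ δ_k < 1 + √2` hold, where `ω_k` is the unique positive real root of
`T_k(x) = x^(k+1) - x^k - 2(x^(k-1) + ⋯ + x + 1)` and `δ_k` is the unique positive real
root of `D_k(x) = x^(2k+1) - 2(x^(2k) + x^(2k-2) + ⋯ + x² + 1)`. -/
theorem omega_le_delta_lt (k : ℕ) (hk : 1 ≤ k) (ω δ : ℝ)
    (hω : 0 < ω) (hωroot : ω ^ (k + 1) - ω ^ k - 2 * ∑ i ∈ Finset.range k, ω ^ i = 0)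
    (hδ : 0 < δ)
    (hδroot : δ ^ (2 * k + 1) - 2 * ∑ m ∈ Finset.range (k + 1), δ ^ (2 * m) = 0) :
    (1 + Real.sqrt 5) / 2 ≤ ω ∧ ω ≤ δ ∧ δ < 1 + Real.sqrt 2 := by
  have hA0 : (0:ℝ) < ω ^ k := pow_pos hω k
  have hS1 : (1:ℝ) ≤ ∑ i ∈ Finset.range k, ω ^ i := by
    have h0 : (0:ℕ) ∈ Finset.range k := Finset.mem_range.mpr (by omega)
    calc (1:ℝ) = ω ^ 0 := (pow_zero ω).symm
    _ ≤ ∑ i ∈ Finset.range k, ω ^ i :=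
      Finset.single_le_sum (fun i _ => (pow_pos hω i).le) h0
  have hgeom : (∑ i ∈ Finset.range k, ω ^ i) * (ω - 1) = ω ^ k - 1 := geom_sum_mul ω k
  have hpow : ω ^ (k + 1) = ω ^ k * ω := pow_succ ω k
  -- ω > 1
  have hω1 : 1 < ω := by nlinarith [hA0, hS1, hωroot, hpow]
  -- key identity: ω^k (ω-1)^2 = 2(ω^k - 1)
  have h1 : ω ^ k * (ω - 1) ^ 2 = 2 * (ω ^ k - 1) := by
    linear_combination (ω - 1) * hωroot + 2 * hgeom + (ω - 1) * hpow
  -- 1 + 2ω - ω² > 0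
  have hq : 0 < 1 + 2 * ω - ω ^ 2 := by nlinarith [hA0, h1]
  have hAq : ω ^ k * (1 + 2 * ω - ω ^ 2) = 2 := by linear_combination -h1
  have hAw : ω ≤ ω ^ k := le_self_pow₀ hω1.le (by omega)
  -- ω ≥ 2
  have hω2 : 2 ≤ ω := by
    have hm := mul_le_mul_of_nonneg_right hAw hq.le
    nlinarith [hm, hAq, hω1]
  -- δ > 1
  have hδS1 : (1:ℝ) ≤ ∑ m ∈ Finset.range (k + 1), δ ^ (2 * m) := by
    have h0 : (0:ℕ) ∈ Finset.range (k + 1) := Finset.mem_range.mpr (by omega)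
    calc (1:ℝ) = δ ^ (2 * 0) := by norm_num
    _ ≤ ∑ m ∈ Finset.range (k + 1), δ ^ (2 * m) :=
      Finset.single_le_sum (fun i _ => (pow_pos hδ (2 * i)).le) h0
  have hδ1 : 1 < δ := by
    by_contra h
    push_neg at h
    have : δ ^ (2 * k + 1) ≤ 1 := pow_le_one₀ hδ.le h
    linarith
  -- rewrite the δ root equation in terms of δ²
  rw [pow_succ] at hδroot
  simp_rw [pow_mul] at hδroot
  -- hδroot : (δ^2)^k * δ - 2 * ∑ m, (δ^2)^m = 0
  have hδgeom : (∑ m ∈ Finset.range (k + 1), (δ ^ 2) ^ m) * (δ ^ 2 - 1)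
      = (δ ^ 2) ^ (k + 1) - 1 := geom_sum_mul (δ ^ 2) (k + 1)
  have hB0 : (0:ℝ) < (δ ^ 2) ^ k := pow_pos (by positivity) k
  have h2 : δ * (δ ^ 2) ^ k * (δ ^ 2 - 1) = 2 * (δ ^ 2 * (δ ^ 2) ^ k - 1) := by
    linear_combination (δ ^ 2 - 1) * hδroot + 2 * hδgeom
  -- δ < 1 + √2
  have hδquad : δ ^ 2 - 2 * δ - 1 < 0 := by
    nlinarith [h2, mul_pos hδ hB0]
  have hsqrt2 : Real.sqrt 2 ^ 2 = 2 := Real.sq_sqrt (by norm_num)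
  have hδlt : δ < 1 + Real.sqrt 2 := by
    nlinarith [hδquad, hsqrt2, Real.sqrt_nonneg 2, sq_nonneg (δ - 1 - Real.sqrt 2)]
  -- D_k(ω) ≤ 0, in the form ω * (ω²)^k ≤ 2 * Σ (ω²)^m
  have hωgeom : (∑ m ∈ Finset.range (k + 1), (ω ^ 2) ^ m) * (ω ^ 2 - 1)
      = (ω ^ 2) ^ (k + 1) - 1 := geom_sum_mul (ω ^ 2) (k + 1)
  have hrc : (ω ^ 2) ^ k = (ω ^ k) ^ 2 := by
    rw [← pow_mul, ← pow_mul, Nat.mul_comm]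
  have hEnn : 0 ≤ 2 * ω ^ 2 * (ω ^ k) ^ 2 - 2 - ω * (ω ^ k) ^ 2 * (ω ^ 2 - 1) := by
    have hE : 2 * ω ^ 2 * (ω ^ k) ^ 2 - 2 - ω * (ω ^ k) ^ 2 * (ω ^ 2 - 1)
        = ω ^ k * ω * (ω - 1) * (ω - 2) * (ω + 1) + 2 * (ω ^ 2 - 1) := by
      linear_combination (-ω * ω ^ k - ω ^ 2) * h1
    rw [hE]
    have ht : 0 ≤ ω ^ k * ω * (ω - 1) * (ω - 2) * (ω + 1) := by
      apply mul_nonneg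
      apply mul_nonneg
      apply mul_nonneg
      apply mul_nonneg hA0.le hω.le
      all_goals linarith
    nlinarith [hω2]
  have hfac : (2 * (∑ m ∈ Finset.range (k + 1), (ω ^ 2) ^ m) - ω * (ω ^ 2) ^ k) * (ω ^ 2 - 1)
      = 2 * ω ^ 2 * (ω ^ k) ^ 2 - 2 - ω * (ω ^ k) ^ 2 * (ω ^ 2 - 1) := by
    linear_combination 2 * hωgeom + (2 * ω ^ 2 - ω * (ω ^ 2 - 1)) * hrc
  have hDω : ω * (ω ^ 2) ^ k ≤ 2 * ∑ m ∈ Finset.range (k + 1), (ω ^ 2) ^ m := by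
    have hw2 : (0:ℝ) < ω ^ 2 - 1 := by nlinarith [hω2]
    have hprod : 0 ≤ (2 * (∑ m ∈ Finset.range (k + 1), (ω ^ 2) ^ m) - ω * (ω ^ 2) ^ k) * (ω ^ 2 - 1) := by
      rw [hfac]; exact hEnn
    have := le_of_mul_le_mul_right (by linarith : 0 * (ω ^ 2 - 1) ≤ (2 * (∑ m ∈ Finset.range (k + 1), (ω ^ 2) ^ m) - ω * (ω ^ 2) ^ k) * (ω ^ 2 - 1)) hw2
    linarith
  -- ω ≤ δ
  have hωδ : ω ≤ δ := by
    by_contra h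
    push_neg at h
    have hterm : ∀ m ∈ Finset.range (k + 1),
        (ω ^ 2) ^ m * (δ ^ 2) ^ k ≤ (δ ^ 2) ^ m * (ω ^ 2) ^ k := by
      intro m hm
      have hmk : m ≤ k := by simpa using Nat.lt_succ_iff.mp (Finset.mem_range.mp hm)
      have eδ : (δ ^ 2) ^ k = (δ ^ 2) ^ m * (δ ^ 2) ^ (k - m) := by
        rw [← pow_add]; congr 1; omega
      have eω : (ω ^ 2) ^ k = (ω ^ 2) ^ m * (ω ^ 2) ^ (k - m) := by
        rw [← pow_add]; congr 1; omega
      have hle : (δ ^ 2) ^ (k - m) ≤ (ω ^ 2) ^ (k - m) := by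
        gcongr
      have hpos : (0:ℝ) ≤ (ω ^ 2) ^ m * (δ ^ 2) ^ m := by positivity
      rw [eδ, eω]
      nlinarith [mul_le_mul_of_nonneg_left hle hpos]
    have hsum : (∑ m ∈ Finset.range (k + 1), (ω ^ 2) ^ m) * (δ ^ 2) ^ k
        ≤ (∑ m ∈ Finset.range (k + 1), (δ ^ 2) ^ m) * (ω ^ 2) ^ k := by
      rw [Finset.sum_mul, Finset.sum_mul]
      exact Finset.sum_le_sum hterm
    have hc1 := mul_le_mul_of_nonneg_right hDω (le_of_lt hB0)
    -- ω * (ω²)^k * (δ²)^k ≤ 2 Sω (δ²)^k ≤ 2 Sδ (ω²)^k = δ (δ²)^k (ω²)^k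
    have hfin : ω * ((ω ^ 2) ^ k * (δ ^ 2) ^ k) ≤ δ * ((ω ^ 2) ^ k * (δ ^ 2) ^ k) := by
      nlinarith [hc1, hsum, hδroot, pow_pos (show (0:ℝ) < ω ^ 2 by positivity) k]
    have hP : (0:ℝ) < (ω ^ 2) ^ k * (δ ^ 2) ^ k := by positivity
    have : ω ≤ δ := by
      have := (mul_le_mul_iff_of_pos_right hP).mp (by linarith [hfin] : ω * ((ω ^ 2) ^ k * (δ ^ 2) ^ k) ≤ δ * ((ω ^ 2) ^ k * (δ ^ 2) ^ k))
      linarith [this]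
    linarith
  refine ⟨?_, hωδ, hδlt⟩
  have h5 : Real.sqrt 5 ≤ 3 := by
    nlinarith [Real.sq_sqrt (show (0:ℝ) ≤ 5 by norm_num), Real.sqrt_nonneg 5]
  linarith
end

section
/- The sequence (ω_k)_{k≥1} converges to 1 + √2 as k → ∞, where ω_k is the unique positive real root of T_k(x) = x^{k+1} − x^k − 2x^{k−1} − ⋯ − 2x − 2. -/
open Filter Finset

lemma bound_aux (k : ℕ) (hk : 1 ≤ k) (w : ℝ) (hw : 0 < w)
    (heq : w ^ (k + 1) - w ^ k - 2 * ∑ i ∈ Finset.range k, w ^ i = 0) :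
    (1 + Real.sqrt 2) - ((1 + Real.sqrt 2) / Real.sqrt 2) / k ≤ w ∧ w ≤ 1 + Real.sqrt 2 := by
  set s := Real.sqrt 2 with hsdef
  have hs : s ^ 2 = 2 := Real.sq_sqrt (by norm_num)
  have hs0 : (0:ℝ) < s := Real.sqrt_pos.2 (by norm_num)
  set S := ∑ i ∈ Finset.range k, w ^ i with hSdef
  have hS : S * (w - 1) = w ^ k - 1 := geom_sum_mul w k
  have key : w ^ k * (2 - (w - 1) ^ 2) = 2 := by
    linear_combination (1 - w) * heq - 2 * hS
  have hp0 : (0:ℝ) < w ^ k := pow_pos hw k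
  have hp1 : (1:ℝ) ≤ w ^ k := by nlinarith [mul_nonneg hp0.le (sq_nonneg (w - 1))]
  have hw1 : (1:ℝ) ≤ w := by
    by_contra hlt
    push_neg at hlt
    have : w ^ k < 1 := pow_lt_one₀ hw.le hlt (by omega)
    linarith
  have h2 : (w - 1) ^ 2 < 2 := by nlinarith
  have hwa : w < 1 + s := by nlinarith [sq_nonneg (w - 1 - s)]
  refine ⟨?_, hwa.le⟩
  -- sum lower bound
  have hSk : (k : ℝ) ≤ S := by
    calc (k:ℝ) = ∑ _i ∈ Finset.range k, (1:ℝ) := by simp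
      _ ≤ S := Finset.sum_le_sum (fun i _ => one_le_pow₀ hw1)
  have hws : w * w ^ k = w ^ k + 2 * S := by linear_combination heq
  have h2k : 2 * (k:ℝ) ≤ w * w ^ k := by linarith
  have hsw0 : (0:ℝ) ≤ (1 + s) - w := by linarith
  have hexp : w ^ k * ((1 + s) - w) * ((w - 1) + s) = 2 := by
    linear_combination key + w ^ k * hs
  have hA : w ^ k * ((1 + s) - w) * s ≤ 2 := by
    nlinarith [mul_nonneg (mul_nonneg hp0.le hsw0) (by linarith : (0:ℝ) ≤ w - 1)]
  have hk' : (k:ℝ) ≤ w ^ k * (1 + s) / 2 := by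
    nlinarith [mul_le_mul_of_nonneg_right hwa.le hp0.le]
  have hfin : ((1 + s) - w) * (s * k) ≤ 1 + s := by
    have h5 : ((1 + s) - w) * s * (k:ℝ) ≤ ((1 + s) - w) * s * (w ^ k * (1 + s) / 2) :=
      mul_le_mul_of_nonneg_left hk' (mul_nonneg hsw0 hs0.le)
    nlinarith [mul_le_mul_of_nonneg_right hA (by positivity : (0:ℝ) ≤ (1 + s) / 2)]
  have hk0 : (0:ℝ) < (k:ℝ) := by exact_mod_cast hk
  have hskpos : (0:ℝ) < s * k := by positivity
  have := (le_div_iff₀ hskpos).2 hfin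
  have hdd : (1 + s) / (s * (k:ℝ)) = ((1 + s) / s) / k := by rw [div_div]
  linarith [hdd ▸ this]

/-- The sequence `(ω_k)_{k≥1}` converges to `1 + √2`, where `ω_k` is
the unique positive real root of `T_k(x) = x^(k+1) - x^k - 2(x^(k-1) + ⋯ + x + 1)`. -/
theorem omega_tendsto (ω : ℕ → ℝ)
    (h : ∀ k, 1 ≤ k → 0 < ω k ∧
      (ω k) ^ (k + 1) - (ω k) ^ k - 2 * ∑ i ∈ Finset.range k, (ω k) ^ i = 0) :
    Filter.Tendsto ω Filter.atTop (nhds (1 + Real.sqrt 2)) := by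
  have hlow : Filter.Tendsto
      (fun k : ℕ => (1 + Real.sqrt 2) - ((1 + Real.sqrt 2) / Real.sqrt 2) / k)
      Filter.atTop (nhds (1 + Real.sqrt 2)) := by
    have := tendsto_const_div_atTop_nhds_zero_nat ((1 + Real.sqrt 2) / Real.sqrt 2)
    simpa using tendsto_const_nhds.sub this
  refine tendsto_of_tendsto_of_tendsto_of_le_of_le' hlow tendsto_const_nhds ?_ ?_
  · filter_upwards [Filter.eventually_ge_atTop 1] with k hk
    exact (bound_aux k hk (ω k) (h k hk).1 (h k hk).2).1
  · filter_upwards [Filter.eventually_ge_atTop 1] with k hk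
    exact (bound_aux k hk (ω k) (h k hk).1 (h k hk).2).2
end

section
/- For every integer p ≥ 2, the group presented by ⟨a, t | a^p = 1, [a, t^k a t^{−k}] = 1 for all integers k ≥ 1⟩ is isomorphic to the lamplighter group L_p, via the isomorphism sending a and t to the canonical generators a and t of L_p. -/
open scoped commutatorElement in
/-- Relators for the presentation `⟨a, t | aᵖ = 1, [a, tᵏat⁻ᵏ] = 1 (k ≥ 1)⟩` of the
lamplighter group, with `a` and `t` corresponding to `false` and `true`. -/
def lampRels (p : ℕ) : Set (FreeGroup Bool) :=
  {FreeGroup.of false ^ p} ∪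
    {r | ∃ k : ℕ, 1 ≤ k ∧
      r = ⁅FreeGroup.of false,
            FreeGroup.of true ^ k * FreeGroup.of false * (FreeGroup.of true ^ k)⁻¹⁆}

namespace LampAux

open Multiplicative Finsupp SemidirectProduct

lemma conj_pow' {G : Type*} [Group G] (g a : G) (n : ℕ) :
    (g * a * g⁻¹) ^ n = g * a ^ n * g⁻¹ := by
  rw [← MulAut.conj_apply, ← map_pow, MulAut.conj_apply]

lemma lampShift_single (p : ℕ) (m j : ℤ) (v : ZMod p) :
    lampShift p (ofAdd m) (ofAdd (single j v)) = ofAdd (single (j + m) v) := by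
  set σ : MulAut (Multiplicative (ℤ →₀ ZMod p)) :=
    AddEquiv.toMultiplicative (Finsupp.domCongr (Equiv.addRight (1 : ℤ))) with hσ
  have hfwd : ∀ (j : ℤ), σ (ofAdd (single j v)) = ofAdd (single (j + 1) v) := by
    intro j
    show ofAdd (Finsupp.domCongr (Equiv.addRight (1 : ℤ)) (single j v)) = _
    rw [Finsupp.domCongr_apply, Finsupp.equivMapDomain_single, Equiv.coe_addRight]
  have hbwd : ∀ (j : ℤ), σ⁻¹ (ofAdd (single j v)) = ofAdd (single (j - 1) v) := by
    intro j
    have : σ (ofAdd (single (j - 1) v)) = ofAdd (single j v) := by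
      rw [hfwd, sub_add_cancel]
    rw [← this]
    exact (σ.symm_apply_apply _)
  have key : ∀ (m : ℤ) (j : ℤ), (σ ^ m) (ofAdd (single j v)) = ofAdd (single (j + m) v) := by
    intro m
    induction m using Int.induction_on with
    | zero => intro j; simp
    | succ n ih =>
        intro j
        rw [zpow_add_one, MulAut.mul_apply, hfwd, ih,
          show j + 1 + (n : ℤ) = j + ((n : ℤ) + 1) by ring]
    | pred n ih =>
        intro j
        rw [zpow_sub_one, MulAut.mul_apply, hbwd, ih,
          show j - 1 + -(n : ℤ) = j + (-(n : ℤ) - 1) by ring]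
  simpa [lampShift, zpowersHom_apply, hσ] using key m j

lemma t_pow (p : ℕ) (m : ℤ) :
    (Lamplighter.t p) ^ m = SemidirectProduct.inr (ofAdd m) := by
  rw [Lamplighter.t, ← map_zpow]
  norm_num [← ofAdd_zsmul]

lemma t_conj_single (p : ℕ) (m j : ℤ) (v : ZMod p) :
    (Lamplighter.t p) ^ m * SemidirectProduct.inl (ofAdd (single j v)) *
      ((Lamplighter.t p) ^ m)⁻¹ =
    SemidirectProduct.inl (ofAdd (single (j + m) v)) := by
  rw [t_pow, ← map_inv, ← SemidirectProduct.inl_aut, lampShift_single]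

lemma a_pow (p : ℕ) : (Lamplighter.a p) ^ p = 1 := by
  rw [Lamplighter.a, ← map_pow, ← ofAdd_nsmul, Finsupp.smul_single]
  norm_num

section Gside

open PresentedGroup

variable (p : ℕ)

private noncomputable def τ : PresentedGroup (lampRels p) := PresentedGroup.of true
private noncomputable def A : PresentedGroup (lampRels p) := PresentedGroup.of false

lemma rel_one : ∀ r ∈ lampRels p, PresentedGroup.mk (lampRels p) r = 1 := fun r hr =>
  (QuotientGroup.eq_one_iff r).mpr (Subgroup.subset_normalClosure hr)

lemma A_pow : A p ^ p = 1 := by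
  have := rel_one p _ (Or.inl rfl)
  rwa [map_pow] at this

lemma comm_rel (k : ℕ) (hk : 1 ≤ k) :
    Commute (A p) (τ p ^ k * A p * (τ p ^ k)⁻¹) := by
  have := rel_one p _ (Or.inr ⟨k, hk, rfl⟩)
  rw [map_commutatorElement, map_mul, map_mul, map_inv, map_pow] at this
  exact commutatorElement_eq_one_iff_commute.mp this

noncomputable def c (i : ℤ) : PresentedGroup (lampRels p) := τ p ^ i * A p * (τ p ^ i)⁻¹

lemma c_zero : c p 0 = A p := by simp [c]

lemma conj_c (m i : ℤ) : τ p ^ m * c p i * (τ p ^ m)⁻¹ = c p (m + i) := by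
  simp only [c, zpow_add]
  group

lemma comm_c0 (i : ℤ) (hi : 0 ≤ i) : Commute (c p 0) (c p i) := by
  rcases eq_or_lt_of_le hi with h | h
  · rw [← h]
  · have hk : 1 ≤ i.toNat := by omega
    have : c p i = τ p ^ i.toNat * A p * (τ p ^ i.toNat)⁻¹ := by
      rw [c, ← zpow_natCast (τ p) i.toNat, Int.toNat_of_nonneg hi]
    rw [c_zero, this]
    exact comm_rel p i.toNat hk

lemma comm_c (i j : ℤ) : Commute (c p i) (c p j) := by
  have key : ∀ i j : ℤ, i ≤ j → Commute (c p i) (c p j) := by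
    intro i j hij
    have h0 : Commute (c p 0) (c p (j - i)) := comm_c0 p _ (by omega)
    have := h0.map (MulAut.conj (τ p ^ i)).toMonoidHom
    simp only [MulEquiv.coe_toMonoidHom, MulAut.conj_apply, conj_c] at this
    rwa [add_zero, show i + (j - i) = j by ring] at this
  rcases le_total i j with h | h
  · exact key i j h
  · exact (key j i h).symm

lemma c_pow (i : ℤ) : c p i ^ p = 1 := by
  rw [c, conj_pow', A_pow, mul_one, mul_inv_cancel]

noncomputable def H : Subgroup (PresentedGroup (lampRels p)) :=
  Subgroup.closure (Set.range (c p))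

noncomputable instance : CommGroup (H p) :=
  Subgroup.closureCommGroupOfComm (by rintro _ ⟨i, rfl⟩ _ ⟨j, rfl⟩; exact comm_c p i j)

noncomputable def cH (i : ℤ) : H p := ⟨c p i, Subgroup.subset_closure ⟨i, rfl⟩⟩

lemma cH_pow_p (i : ℤ) : cH p i ^ p = 1 :=
  Subtype.ext (by simpa [cH] using c_pow p i)

noncomputable def compHom (i : ℤ) : ZMod p →+ Additive (H p) :=
  ZMod.lift p ⟨zmultiplesHom _ (Additive.ofMul (cH p i)), by
    simp only [zmultiplesHom_apply, ← ofMul_zpow, zpow_natCast, cH_pow_p]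
    rfl⟩

noncomputable def f1 : Multiplicative (ℤ →₀ ZMod p) →* PresentedGroup (lampRels p) where
  toFun x := ((Finsupp.liftAddHom (compHom p) x.toAdd).toMul : H p)
  map_one' := by simp; exact map_zero _
  map_mul' x y := by
    simp only [toAdd_mul, map_add, toMul_add, Subgroup.coe_mul]
    rw [map_add]; rfl

lemma f1_single [NeZero p] (j : ℤ) (v : ZMod p) :
    f1 p (ofAdd (single j v)) = c p j ^ v.val := by
  show (((Finsupp.liftAddHom (compHom p) (single j v)).toMul : H p) :
    PresentedGroup (lampRels p)) = _
  rw [show Finsupp.liftAddHom (compHom p) (single j v) = compHom p j v from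
    Finsupp.liftAddHom_apply_single _ _ _]
  conv_lhs => rw [← ZMod.natCast_rightInverse v]
  rw [compHom, show ((v.val : ℕ) : ZMod p) = ((v.val : ℤ) : ZMod p) by push_cast; rfl,
    ZMod.lift_coe]
  simp only [zmultiplesHom_apply, ← ofMul_zpow, toMul_ofMul, zpow_natCast]
  rfl

noncomputable def f2 : Multiplicative ℤ →* PresentedGroup (lampRels p) :=
  zpowersHom _ (τ p)

lemma compat [NeZero p] (m : ℤ) (x : ℤ →₀ ZMod p) :
    f1 p (lampShift p (ofAdd m) (ofAdd x)) = τ p ^ m * f1 p (ofAdd x) * (τ p ^ m)⁻¹ := by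
  induction x using Finsupp.induction with
  | zero => simp
  | single_add j v f hjf hv ih =>
      have hs : f1 p (lampShift p (ofAdd m) (ofAdd (single j v))) =
          τ p ^ m * f1 p (ofAdd (single j v)) * (τ p ^ m)⁻¹ := by
        rw [lampShift_single, f1_single, f1_single, ← conj_pow', conj_c, add_comm]
      rw [ofAdd_add, map_mul, map_mul, map_mul, hs, ih]
      group

noncomputable def ψ [NeZero p] : Lamplighter p →* PresentedGroup (lampRels p) :=
  SemidirectProduct.lift (f1 p) (f2 p) (by
    intro g
    refine MonoidHom.ext fun x => ?_
    simp only [MonoidHom.comp_apply, MulEquiv.coe_toMonoidHom, MulAut.conj_apply]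
    have := compat p (Multiplicative.toAdd g) (Multiplicative.toAdd x)
    simpa [f2, zpowersHom_apply] using this)

noncomputable def fb : Bool → Lamplighter p :=
  fun b => cond b (Lamplighter.t p) (Lamplighter.a p)

open scoped commutatorElement in
lemma hφrels : ∀ r ∈ lampRels p, FreeGroup.lift (fb p) r = 1 := by
  rintro r (rfl | ⟨k, hk, rfl⟩)
  · rw [map_pow, FreeGroup.lift_apply_of]
    exact a_pow p
  · rw [map_commutatorElement, map_mul, map_mul, map_inv, map_pow]
    simp only [FreeGroup.lift_apply_of]
    show ⁅Lamplighter.a p, Lamplighter.t p ^ k * Lamplighter.a p * (Lamplighter.t p ^ k)⁻¹⁆ = 1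
    rw [← zpow_natCast (Lamplighter.t p) k, Lamplighter.a, t_conj_single]
    exact commutatorElement_eq_one_iff_commute.mpr ((Commute.all _ _).map SemidirectProduct.inl)

noncomputable def φ : PresentedGroup (lampRels p) →* Lamplighter p :=
  PresentedGroup.toGroup (hφrels p)

lemma φ_A : φ p (A p) = Lamplighter.a p := PresentedGroup.toGroup.of _
lemma φ_τ : φ p (τ p) = Lamplighter.t p := PresentedGroup.toGroup.of _

lemma φ_c (j : ℤ) :
    φ p (c p j) = SemidirectProduct.inl (ofAdd (single j (1 : ZMod p))) := by
  rw [c, map_mul, map_mul, map_zpow, map_inv, map_zpow, φ_A, φ_τ, Lamplighter.a,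
    t_conj_single, zero_add]

lemma φ_f1 [NeZero p] (y : ℤ →₀ ZMod p) :
    φ p (f1 p (ofAdd y)) = SemidirectProduct.inl (ofAdd y) := by
  have hsing : ∀ (j : ℤ) (v : ZMod p),
      φ p (f1 p (ofAdd (single j v))) = SemidirectProduct.inl (ofAdd (single j v)) := by
    intro j v
    rw [f1_single, map_pow, φ_c, ← map_pow, ← ofAdd_nsmul, Finsupp.smul_single, nsmul_eq_mul,
      mul_one, ZMod.natCast_rightInverse v]
  induction y using Finsupp.induction with
  | zero => simp
  | single_add j v f hjf hv ih =>
      rw [ofAdd_add, map_mul, map_mul, hsing, ih, ← map_mul, ← ofAdd_add]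

end Gside

end LampAux

/-- For every integer `p ≥ 2`, the group presented by
`⟨a, t | aᵖ = 1, [a, tᵏat⁻ᵏ] = 1 for all integers k ≥ 1⟩` is isomorphic to the
lamplighter group `L_p`, via the isomorphism sending `a` and `t` to the canonical
generators `a` and `t` of `L_p`. -/
theorem lamplighter_presentation (p : ℕ) (hp : 2 ≤ p) :
    ∃ e : PresentedGroup (lampRels p) ≃* Lamplighter p,
      e (PresentedGroup.of false) = Lamplighter.a p ∧
        e (PresentedGroup.of true) = Lamplighter.t p := by
  haveI : NeZero p := ⟨by omega⟩
  haveI : Fact (1 < p) := ⟨by omega⟩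
  have h1 : (LampAux.ψ p).comp (LampAux.φ p) = MonoidHom.id _ := by
    apply PresentedGroup.ext
    intro x
    cases x with
    | false =>
        show LampAux.ψ p (LampAux.φ p (LampAux.A p)) = LampAux.A p
        rw [LampAux.φ_A, Lamplighter.a, LampAux.ψ, SemidirectProduct.lift_inl,
          LampAux.f1_single, ZMod.val_one, pow_one, LampAux.c_zero]
    | true =>
        show LampAux.ψ p (LampAux.φ p (LampAux.τ p)) = LampAux.τ p
        rw [LampAux.φ_τ, Lamplighter.t, LampAux.ψ, SemidirectProduct.lift_inr]
        show LampAux.τ p ^ (1 : ℤ) = LampAux.τ p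
        rw [zpow_one]
  have h2 : (LampAux.φ p).comp (LampAux.ψ p) = MonoidHom.id _ := by
    apply SemidirectProduct.hom_ext
    · refine MonoidHom.ext fun x => ?_
      show LampAux.φ p (LampAux.ψ p (SemidirectProduct.inl x)) = SemidirectProduct.inl x
      rw [LampAux.ψ, SemidirectProduct.lift_inl]
      simpa using LampAux.φ_f1 p (Multiplicative.toAdd x)
    · apply MonoidHom.ext_mint
      show LampAux.φ p (LampAux.ψ p (SemidirectProduct.inr (Multiplicative.ofAdd (1:ℤ)))) = _
      rw [LampAux.ψ, SemidirectProduct.lift_inr]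
      show LampAux.φ p (LampAux.τ p ^ (1 : ℤ)) = _
      rw [zpow_one, LampAux.φ_τ]
      rfl
  refine ⟨MonoidHom.toMulEquiv (LampAux.φ p) (LampAux.ψ p) h1 h2, ?_, ?_⟩
  · exact LampAux.φ_A p
  · exact LampAux.φ_τ p
end
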